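/- arXiv:1306.3609 — 2 statements merged into one kernel-verified Lean document; each statement's English description precedes it below -/
import Mathlib

section
/- (Fano-type minimax lower bound) Let (Θ, ρ) be a pseudometric space, let (𝒳, 𝒜) be a measurable space, and let (P_θ)_{θ ∈ Θ} be a family of probability measures on (𝒳, 𝒜). Suppose θ₁, …, θ_N ∈ Θ with N ≥ 2 satisfy ρ(θ_i, θ_j) ≥ ε for all i ≠ j, and that the Kullback–Leibler divergence satisfies KL(P_{θ_i} ‖ P_{θ_j}) ≤ D for all i, j. Then for every measurable estimator θ̂ : 𝒳 → Θ, sup_{1 ≤ i ≤ N} E_{X ∼ P_{θ_i}}[ ρ(θ̂(X), θ_i)² ] ≥ (ε²/4) · (1 − (D + log 2)/log N). -/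
open MeasureTheory Classical
open scoped ENNReal

/-- The Kullback–Leibler divergence between two measures, valued in `ℝ≥0∞`:
it is `∫ log(dP/dQ) dP` when `P ≪ Q` and this integral makes sense, and `∞` otherwise. -/
noncomputable def klDiv {X : Type*} [MeasurableSpace X] (P Q : Measure X) : ℝ≥0∞ :=
  if P ≪ Q ∧ Integrable (llr P Q) P then ENNReal.ofReal (∫ x, llr P Q x ∂P) else ⊤

/-- A Donsker–Varadhan style lower bound for the KL integral: testing against
`g = λ·1_A` gives `∫ llr dP ≥ λ P(A) − log(Q(A) e^λ + 1)`. -/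
lemma dv_aux {𝒳 : Type*} [MeasurableSpace 𝒳] (P Q : Measure 𝒳)
    [IsProbabilityMeasure P] [IsProbabilityMeasure Q] (hPQ : P ≪ Q)
    (hint : Integrable (llr P Q) P) {A : Set 𝒳} (hA : MeasurableSet A)
    (lam : ℝ) :
    lam * (P A).toReal - Real.log ((Q A).toReal * Real.exp lam + 1)
      ≤ ∫ x, llr P Q x ∂P := by
  set C : ℝ := (Q A).toReal * Real.exp lam + 1 with hCdef
  have hC1 : 1 ≤ C := by
    have := mul_nonneg (ENNReal.toReal_nonneg : 0 ≤ (Q A).toReal) (Real.exp_pos lam).le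
    simp only [hCdef]; linarith
  have hC0 : (0:ℝ) < C := lt_of_lt_of_le one_pos hC1
  set g : 𝒳 → ℝ := A.indicator fun _ => lam with hgdef
  set H : 𝒳 → ℝ≥0∞ := fun x => ENNReal.ofReal (Real.exp (g x)) * (P.rnDeriv Q x)⁻¹
    with hHdef
  have hgmeas : Measurable g := measurable_const.indicator hA
  have hHmeas : Measurable H :=
    ((Real.measurable_exp.comp hgmeas).ennreal_ofReal).mul
      (Measure.measurable_rnDeriv P Q).inv
  -- ∫⁻ H dP ≤ C
  have hHle : ∫⁻ x, H x ∂P ≤ ENNReal.ofReal C := by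
    conv_lhs => rw [← Measure.withDensity_rnDeriv_eq P Q hPQ,
      lintegral_withDensity_eq_lintegral_mul _ (Measure.measurable_rnDeriv P Q) hHmeas]
    have hpt : ∀ x, (P.rnDeriv Q * H) x
        ≤ A.indicator (fun _ => ENNReal.ofReal (Real.exp lam)) x + 1 := by
      intro x
      have h1 : (P.rnDeriv Q * H) x
          = ENNReal.ofReal (Real.exp (g x)) * (P.rnDeriv Q x * (P.rnDeriv Q x)⁻¹) := by
        simp only [Pi.mul_apply, hHdef]; ring
      have h2 : (P.rnDeriv Q * H) x ≤ ENNReal.ofReal (Real.exp (g x)) := by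
        rw [h1]
        calc ENNReal.ofReal (Real.exp (g x)) * (P.rnDeriv Q x * (P.rnDeriv Q x)⁻¹)
            ≤ ENNReal.ofReal (Real.exp (g x)) * 1 :=
              mul_le_mul_right (ENNReal.mul_inv_le_one _) _
          _ = ENNReal.ofReal (Real.exp (g x)) := mul_one _
      refine h2.trans ?_
      by_cases hx : x ∈ A
      · simp [hgdef, Set.indicator_of_mem hx, le_add_right]
      · simp [hgdef, Set.indicator_of_notMem hx]
    calc ∫⁻ x, (P.rnDeriv Q * H) x ∂Q
        ≤ ∫⁻ x, (A.indicator (fun _ => ENNReal.ofReal (Real.exp lam)) x + 1) ∂Q :=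
          lintegral_mono hpt
      _ = ENNReal.ofReal (Real.exp lam) * Q A + 1 := by
          rw [lintegral_add_right _ measurable_const, lintegral_indicator_const hA,
            lintegral_one, measure_univ]
      _ = ENNReal.ofReal C := by
          rw [hCdef, ENNReal.ofReal_add (mul_nonneg ENNReal.toReal_nonneg (Real.exp_pos _).le)
            zero_le_one, ENNReal.ofReal_one, ENNReal.ofReal_mul ENNReal.toReal_nonneg,
            ENNReal.ofReal_toReal (measure_ne_top Q A), mul_comm]
  -- the real-valued function h
  have h_int : Integrable (fun x => (H x).toReal) P := by
    refine ⟨(hHmeas.ennreal_toReal).aestronglyMeasurable, ?_⟩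
    rw [hasFiniteIntegral_iff_ofReal (ae_of_all _ fun x => ENNReal.toReal_nonneg)]
    exact lt_of_le_of_lt (lintegral_mono fun x => ENNReal.ofReal_toReal_le)
      (hHle.trans_lt ENNReal.ofReal_lt_top)
  have h_int_le : ∫ x, (H x).toReal ∂P ≤ C := by
    rw [integral_eq_lintegral_of_nonneg_ae (ae_of_all _ fun x => ENNReal.toReal_nonneg)
      h_int.aestronglyMeasurable]
    have h1 : ∫⁻ x, ENNReal.ofReal ((H x).toReal) ∂P ≤ ENNReal.ofReal C :=
      (lintegral_mono fun x => ENNReal.ofReal_toReal_le).trans hHle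
    calc (∫⁻ x, ENNReal.ofReal ((H x).toReal) ∂P).toReal
        ≤ (ENNReal.ofReal C).toReal := ENNReal.toReal_mono ENNReal.ofReal_ne_top h1
      _ = C := ENNReal.toReal_ofReal hC0.le
  have hg_int : Integrable g P := (integrable_const lam).indicator hA
  -- pointwise a.e. inequality
  have hae : ∀ᵐ x ∂P, g x - llr P Q x ≤ (H x).toReal / C + (Real.log C - 1) := by
    filter_upwards [Measure.rnDeriv_pos hPQ,
      (Measure.rnDeriv_lt_top P Q).filter_mono hPQ.ae_le] with x hx hx'
    have ht0 : 0 < (P.rnDeriv Q x).toReal := ENNReal.toReal_pos hx.ne' hx'.ne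
    have hHx : (H x).toReal = Real.exp (g x) * ((P.rnDeriv Q x).toReal)⁻¹ := by
      rw [hHdef, ENNReal.toReal_mul, ENNReal.toReal_inv,
        ENNReal.toReal_ofReal (Real.exp_pos _).le]
    have hh0 : 0 < (H x).toReal := by rw [hHx]; positivity
    have hlogH : Real.log ((H x).toReal) = g x - llr P Q x := by
      rw [hHx, Real.log_mul (Real.exp_ne_zero _) (by positivity), Real.log_exp,
        Real.log_inv, llr]
      ring
    have hkey := Real.log_le_sub_one_of_pos (div_pos hh0 hC0)
    rw [Real.log_div hh0.ne' hC0.ne'] at hkey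
    linarith [hlogH]
  have hmono := integral_mono_ae (hg_int.sub hint)
    ((h_int.div_const C).add (integrable_const (Real.log C - 1))) hae
  simp only [Pi.sub_apply, Pi.add_apply] at hmono
  rw [integral_sub hg_int hint, integral_add (h_int.div_const C)
    (integrable_const _), integral_const, integral_div] at hmono
  have hgint : ∫ x, g x ∂P = lam * (P A).toReal := by
    rw [hgdef, integral_indicator_const lam hA, smul_eq_mul, measureReal_def]; ring
  have hdivle : (∫ x, (H x).toReal ∂P) / C ≤ 1 := (div_le_one hC0).mpr h_int_le
  rw [hgint] at hmono
  simp only [probReal_univ, one_smul] at hmono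
  linarith

/-- Fano-type minimax lower bound: if `θ₁, …, θ_N` are `ε`-separated in
the pseudometric `ρ = dist` and all pairwise KL divergences are at most `D`, then any
measurable estimator has worst-case squared-distance risk at least
`(ε²/4)·(1 − (D + log 2)/log N)`. -/
theorem fano_minimax_lower_bound
    {Θ 𝒳 : Type*} [PseudoMetricSpace Θ] [MeasurableSpace Θ] [OpensMeasurableSpace Θ]
    [MeasurableSpace 𝒳] (P : Θ → Measure 𝒳)
    (N : ℕ) (hN : 2 ≤ N) (θ : Fin N → Θ)
    (hP : ∀ i, IsProbabilityMeasure (P (θ i)))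
    (ε D : ℝ) (hε : 0 ≤ ε) (hD : 0 ≤ D)
    (hsep : ∀ i j, i ≠ j → ε ≤ dist (θ i) (θ j))
    (hKL : ∀ i j, klDiv (P (θ i)) (P (θ j)) ≤ ENNReal.ofReal D)
    (est : 𝒳 → Θ) (hest : Measurable est) :
    ∃ i : Fin N,
      ENNReal.ofReal (ε ^ 2 / 4 * (1 - (D + Real.log 2) / Real.log N))
        ≤ ∫⁻ x, ENNReal.ofReal (dist (est x) (θ i) ^ 2) ∂(P (θ i)) := by
  set c : ℝ := (D + Real.log 2) / Real.log N with hcdef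
  rcases le_or_gt (ε ^ 2 / 4 * (1 - c)) 0 with h0 | h0
  · exact ⟨⟨0, by omega⟩, by rw [ENNReal.ofReal_of_nonpos h0]; exact zero_le⟩
  have hN1 : (1:ℝ) < N := by
    have : (2:ℝ) ≤ N := by exact_mod_cast hN
    linarith
  have hNpos : (0:ℝ) < N := by linarith
  have hlogN : 0 < Real.log N := Real.log_pos hN1
  have hlog2 : 0 < Real.log 2 := Real.log_pos one_lt_two
  have hc0 : 0 ≤ c := div_nonneg (by linarith) hlogN.le
  have hsq : (0:ℝ) ≤ ε ^ 2 / 4 := by positivity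
  have hc1 : 0 < 1 - c := by nlinarith
  have hε2 : 0 < ε ^ 2 / 4 := by nlinarith
  have hε0 : 0 < ε := lt_of_le_of_ne hε (fun h => by rw [← h] at hε2; norm_num at hε2)
  set A : Fin N → Set 𝒳 := fun i => (fun x => dist (est x) (θ i)) ⁻¹' Set.Iio (ε / 2)
    with hAdef
  have hdistmeas : ∀ i, Measurable fun x => dist (est x) (θ i) := fun i =>
    (continuous_id.dist continuous_const).measurable.comp hest
  have hAmeas : ∀ i, MeasurableSet (A i) := fun i => (hdistmeas i) measurableSet_Iio
  have hAmem : ∀ i x, x ∈ A i ↔ dist (est x) (θ i) < ε / 2 := fun i x => Iff.rfl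
  have hdisj : Pairwise (Function.onFun Disjoint A) := by
    intro i j hij
    rw [Function.onFun, Set.disjoint_left]
    intro x hxi hxj
    have hs := hsep i j hij
    have h1 := dist_triangle (θ i) (est x) (θ j)
    rw [dist_comm (θ i) (est x)] at h1
    rw [hAmem] at hxi hxj
    linarith
  have hKL' : ∀ i j, P (θ i) ≪ P (θ j)
      ∧ Integrable (llr (P (θ i)) (P (θ j))) (P (θ i))
      ∧ ∫ x, llr (P (θ i)) (P (θ j)) x ∂(P (θ i)) ≤ D := by
    intro i j
    have h := hKL i j
    by_cases hcond : P (θ i) ≪ P (θ j) ∧ Integrable (llr (P (θ i)) (P (θ j))) (P (θ i))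
    · refine ⟨hcond.1, hcond.2, ?_⟩
      rw [klDiv, if_pos hcond] at h
      exact (ENNReal.ofReal_le_ofReal_iff hD).mp h
    · rw [klDiv, if_neg hcond] at h
      exact absurd (top_le_iff.mp h) ENNReal.ofReal_ne_top
  have hclaim : ∃ i, (P (θ i)) (A i) ≤ ENNReal.ofReal c := by
    by_contra hcon
    push_neg at hcon
    have hp : ∀ i, c < ((P (θ i)) (A i)).toReal := fun i =>
      (ENNReal.ofReal_lt_iff_lt_toReal hc0 (measure_ne_top _ _)).mp (hcon i)
    have hq : ∀ i j, 1 / (N:ℝ) < ((P (θ j)) (A i)).toReal := by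
      intro i j
      haveI := hP i; haveI := hP j
      obtain ⟨hac, hintg, hDle⟩ := hKL' i j
      have hdv := dv_aux (P (θ i)) (P (θ j)) hac hintg (hAmeas i) (Real.log N)
      rw [Real.exp_log hNpos] at hdv
      set q : ℝ := ((P (θ j)) (A i)).toReal with hqdef
      have hq0 : (0:ℝ) ≤ q := ENNReal.toReal_nonneg
      have hcN : Real.log N * c = D + Real.log 2 := by
        rw [hcdef]; field_simp
      have h2 : Real.log 2 < Real.log (q * N + 1) := by
        have h3 : Real.log N * c < Real.log N * ((P (θ i)) (A i)).toReal := by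
          exact (mul_lt_mul_iff_right₀ hlogN).mpr (hp i)
        have h4 := hdv.trans hDle
        linarith [hcN ▸ h3]
      have h4 : (2:ℝ) < q * N + 1 := by
        have h5 := Real.exp_lt_exp.mpr h2
        rwa [Real.exp_log two_pos,
          Real.exp_log (by positivity : (0:ℝ) < q * (N:ℝ) + 1)] at h5
      rw [div_lt_iff₀ hNpos]
      linarith
    set j0 : Fin N := ⟨0, by omega⟩ with hj0
    haveI := hP j0
    have hsum : ∑ i : Fin N, ((P (θ j0)) (A i)) ≤ 1 := by
      calc ∑ i : Fin N, ((P (θ j0)) (A i)) = ∑' i : Fin N, ((P (θ j0)) (A i)) :=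
            (tsum_fintype _).symm
        _ = (P (θ j0)) (⋃ i, A i) := (measure_iUnion hdisj hAmeas).symm
        _ ≤ 1 := prob_le_one
    have hsumr : ∑ i : Fin N, ((P (θ j0)) (A i)).toReal ≤ 1 := by
      rw [← ENNReal.toReal_sum (fun i _ => measure_ne_top _ _)]
      have := ENNReal.toReal_mono ENNReal.one_ne_top hsum
      simpa using this
    have hlt : (1:ℝ) < ∑ i : Fin N, ((P (θ j0)) (A i)).toReal := by
      have h5 : ∑ _i : Fin N, (1 / (N:ℝ)) < ∑ i : Fin N, ((P (θ j0)) (A i)).toReal :=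
        Finset.sum_lt_sum_of_nonempty
          (haveI : Nonempty (Fin N) := ⟨⟨0, by omega⟩⟩; Finset.univ_nonempty)
          (fun i _ => hq i j0)
      rwa [Finset.sum_const, Finset.card_univ, Fintype.card_fin, nsmul_eq_mul,
        mul_one_div, div_self hNpos.ne'] at h5
    linarith
  obtain ⟨i, hi⟩ := hclaim
  refine ⟨i, ?_⟩
  haveI := hP i
  have hcompl : ENNReal.ofReal (1 - c) ≤ (P (θ i)) (A i)ᶜ := by
    rw [prob_compl_eq_one_sub (hAmeas i), ENNReal.ofReal_sub 1 hc0, ENNReal.ofReal_one]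
    exact tsub_le_tsub_left hi 1
  calc ENNReal.ofReal (ε ^ 2 / 4 * (1 - c))
      = ENNReal.ofReal (ε ^ 2 / 4) * ENNReal.ofReal (1 - c) := ENNReal.ofReal_mul hsq
    _ ≤ ENNReal.ofReal (ε ^ 2 / 4) * (P (θ i)) (A i)ᶜ := mul_le_mul_right hcompl _
    _ = ∫⁻ x, (A i)ᶜ.indicator (fun _ => ENNReal.ofReal (ε ^ 2 / 4)) x ∂(P (θ i)) := by
        rw [lintegral_indicator_const (hAmeas i).compl]
    _ ≤ ∫⁻ x, ENNReal.ofReal (dist (est x) (θ i) ^ 2) ∂(P (θ i)) := by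
        refine lintegral_mono fun x => ?_
        by_cases hx : x ∈ (A i)ᶜ
        · rw [Set.indicator_of_mem hx]
          refine ENNReal.ofReal_le_ofReal ?_
          have hge : ε / 2 ≤ dist (est x) (θ i) := not_lt.mp hx
          nlinarith [@dist_nonneg Θ _ (est x) (θ i)]
        · rw [Set.indicator_of_notMem hx]; exact zero_le
end

section
/- (High-probability Fano-type lower bound) Let (Θ, ρ) be a pseudometric space, let (𝒳, 𝒜) be a measurable space, and let (P_θ)_{θ ∈ Θ} be a family of probability measures on (𝒳, 𝒜). Suppose θ₁, …, θ_N ∈ Θ with N ≥ 2 satisfy ρ(θ_i, θ_j) ≥ ε for all i ≠ j, and that the Kullback–Leibler divergence satisfies KL(P_{θ_i} ‖ P_{θ_j}) ≤ D for all i, j. Then for every measurable estimator θ̂ : 𝒳 → Θ, sup_{1 ≤ i ≤ N} P_{θ_i}( ρ(θ̂(X), θ_i) ≥ ε/2 ) ≥ 1 − (D + log 2)/log N. -/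
open MeasureTheory Classical
open scoped ENNReal

lemma binEnt_le (p : ℝ) (h0 : 0 ≤ p) (h1 : p ≤ 1) :
    -Real.log 2 ≤ p * Real.log p + (1 - p) * Real.log (1 - p) := by
  have := Real.binEntropy_le_log_two (p := p)
  rw [Real.binEntropy, Real.log_inv, Real.log_inv] at this
  nlinarith [this]

lemma key_lintegral {X : Type*} [MeasurableSpace X] (P Q : Measure X)
    [IsProbabilityMeasure P] [IsProbabilityMeasure Q] (hPQ : P ≪ Q)
    {A : Set X} (hA : MeasurableSet A) :
    ∫⁻ x in A, (P.rnDeriv Q x)⁻¹ ∂P ≤ Q A := by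
  rw [← setLIntegral_rnDeriv_mul hPQ (f := fun x => (P.rnDeriv Q x)⁻¹) ((Measure.measurable_rnDeriv P Q).inv).aemeasurable hA]
  calc ∫⁻ x in A, P.rnDeriv Q x * (P.rnDeriv Q x)⁻¹ ∂Q
      ≤ ∫⁻ _x in A, 1 ∂Q := by
        refine lintegral_mono fun x => ?_
        rcases eq_or_ne (P.rnDeriv Q x) 0 with h | h
        · simp [h]
        rcases eq_or_ne (P.rnDeriv Q x) ⊤ with h' | h'
        · simp [h']
        · rw [ENNReal.mul_inv_cancel h h']
    _ = Q A := by simp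

lemma setIntegral_llr_ge {X : Type*} [MeasurableSpace X] (P Q : Measure X)
    [IsProbabilityMeasure P] [IsProbabilityMeasure Q]
    (hPQ : P ≪ Q) (hint : Integrable (llr P Q) P)
    {A : Set X} (hA : MeasurableSet A) :
    (P A).toReal * Real.log ((P A).toReal / (Q A).toReal) ≤ ∫ x in A, llr P Q x ∂P := by
  by_cases hPA : P A = 0
  · rw [Measure.restrict_eq_zero.mpr hPA, hPA]
    simp
  have hp : 0 < (P A).toReal := ENNReal.toReal_pos hPA (measure_ne_top P A)
  have hQA : Q A ≠ 0 := fun h => hPA (hPQ h)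
  have hq : 0 < (Q A).toReal := ENNReal.toReal_pos hQA (measure_ne_top Q A)
  set p := (P A).toReal
  set q := (Q A).toReal
  set c := q / p with hc
  have hcpos : 0 < c := div_pos hq hp
  set g : X → ℝ := fun x => ((P.rnDeriv Q x)⁻¹).toReal with hg
  have hgmeas : Measurable g := (Measure.measurable_rnDeriv P Q).inv.ennreal_toReal
  have hrn_pos : ∀ᵐ x ∂P, 0 < P.rnDeriv Q x := Measure.rnDeriv_pos hPQ
  have hrn_top : ∀ᵐ x ∂P, P.rnDeriv Q x ≠ ∞ := hPQ.ae_le (Measure.rnDeriv_ne_top P Q)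
  have hof : ∀ᵐ x ∂P, ENNReal.ofReal (g x) = (P.rnDeriv Q x)⁻¹ := by
    filter_upwards [hrn_pos] with x hx
    exact ENNReal.ofReal_toReal (ENNReal.inv_ne_top.mpr hx.ne')
  have hgint : Integrable g P := by
    refine ⟨hgmeas.aestronglyMeasurable, ?_⟩
    rw [hasFiniteIntegral_iff_ofReal (ae_of_all _ fun x => ENNReal.toReal_nonneg)]
    rw [lintegral_congr_ae hof]
    have := key_lintegral P Q hPQ MeasurableSet.univ
    rw [Measure.restrict_univ] at this
    exact lt_of_le_of_lt this (by simp [measure_lt_top])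
  have hgA : ∫ x in A, g x ∂P ≤ q := by
    rw [integral_eq_lintegral_of_nonneg_ae (ae_of_all _ fun x => ENNReal.toReal_nonneg)
      hgmeas.aestronglyMeasurable.restrict]
    rw [lintegral_congr_ae (ae_restrict_of_ae hof)]
    refine ENNReal.toReal_le_of_le_ofReal hq.le ?_
    rw [ENNReal.ofReal_toReal (measure_ne_top Q A)]
    exact key_lintegral P Q hPQ hA
  have hptws : ∀ᵐ x ∂P, (1 - Real.log c) - g x / c ≤ llr P Q x := by
    filter_upwards [hrn_pos, hrn_top] with x h0 htop
    have hf : 0 < (P.rnDeriv Q x).toReal := ENNReal.toReal_pos h0.ne' htop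
    have hgx : g x = ((P.rnDeriv Q x).toReal)⁻¹ := by
      simp [hg, ENNReal.toReal_inv]
    have hgpos : 0 < g x := by rw [hgx]; positivity
    have h1 : Real.log (g x / c) ≤ g x / c - 1 := Real.log_le_sub_one_of_pos (by positivity)
    rw [Real.log_div hgpos.ne' hcpos.ne', hgx, Real.log_inv] at h1
    rw [llr_def]
    dsimp only
    rw [hgx]
    linarith
  have hIlhs : Integrable (fun x => (1 - Real.log c) - g x / c) (P.restrict A) :=
    (integrable_const _).sub (hgint.restrict.div_const c)
  have hmono := integral_mono_ae hIlhs hint.restrict (ae_restrict_of_ae hptws)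
  rw [integral_sub (integrable_const _) (hgint.restrict.div_const c), integral_const,
    integral_div] at hmono
  simp only [Measure.restrict_apply_univ, smul_eq_mul] at hmono
  have hqc : q / c = p := by field_simp [hc]; rw [hc]; exact (div_mul_cancel₀ q hp.ne').symm
  have hlog : Real.log (p / q) = -Real.log c := by
    rw [hc, Real.log_div hq.ne' hp.ne', Real.log_div hp.ne' hq.ne']; ring
  have h2 : (∫ x in A, g x ∂P) / c ≤ p := by
    rw [← hqc]
    gcongr
  calc p * Real.log (p / q) = p * (1 - Real.log c) - p := by rw [hlog]; ring
    _ ≤ p * (1 - Real.log c) - (∫ x in A, g x ∂P) / c := by linarith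
    _ ≤ ∫ x in A, llr P Q x ∂P := by rw [measureReal_def, Measure.restrict_apply_univ] at hmono; exact hmono

/-- High-probability Fano-type lower bound: if `θ₁, …, θ_N` are
`ε`-separated in the pseudometric `ρ = dist` and all pairwise KL divergences are at
most `D`, then any measurable estimator errs by at least `ε/2` with probability at
least `1 − (D + log 2)/log N` for some `θᵢ`. -/
theorem fano_high_probability_lower_bound
    {Θ 𝒳 : Type*} [PseudoMetricSpace Θ] [MeasurableSpace Θ] [OpensMeasurableSpace Θ]
    [MeasurableSpace 𝒳] (P : Θ → Measure 𝒳)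
    (N : ℕ) (hN : 2 ≤ N) (θ : Fin N → Θ)
    (hP : ∀ i, IsProbabilityMeasure (P (θ i)))
    (ε D : ℝ) (hε : 0 ≤ ε) (hD : 0 ≤ D)
    (hsep : ∀ i j, i ≠ j → ε ≤ dist (θ i) (θ j))
    (hKL : ∀ i j, klDiv (P (θ i)) (P (θ j)) ≤ ENNReal.ofReal D)
    (est : 𝒳 → Θ) (hest : Measurable est) :
    ∃ i : Fin N,
      ENNReal.ofReal (1 - (D + Real.log 2) / Real.log N)
        ≤ P (θ i) {x | ε / 2 ≤ dist (est x) (θ i)} := by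
  have hN1 : (1:ℝ) < (N:ℝ) := by exact_mod_cast lt_of_lt_of_le one_lt_two hN
  have hN0 : (0:ℝ) < (N:ℝ) := by linarith
  have hlogN : 0 < Real.log N := Real.log_pos hN1
  have hlog2 : 0 < Real.log 2 := Real.log_pos one_lt_two
  set α : ℝ := (D + Real.log 2) / Real.log N with hα
  have hαpos : 0 < α := div_pos (by linarith) hlogN
  set δ : ℝ := 1 - α with hδdef
  by_cases hδ0 : δ ≤ 0
  · exact ⟨⟨0, by omega⟩, by rw [ENNReal.ofReal_eq_zero.mpr hδ0]; exact zero_le⟩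
  push_neg at hδ0
  by_contra hcon
  push_neg at hcon
  -- α > 1/N
  have hαN : 1 / (N:ℝ) < α := by
    rw [hα, div_lt_div_iff₀ hN0 hlogN]
    have h2N : (N:ℝ) < 2 ^ N := by exact_mod_cast Nat.lt_two_pow_self
    have : Real.log N < N * Real.log 2 := by
      calc Real.log N < Real.log (2 ^ N) := Real.log_lt_log hN0 h2N
        _ = N * Real.log 2 := by rw [Real.log_pow]
    nlinarith [mul_nonneg hD hN0.le]
  set E : Fin N → Set 𝒳 := fun i => {x | ε / 2 ≤ dist (est x) (θ i)} with hE
  have hEmeas : ∀ i, MeasurableSet (E i) :=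
    fun i => measurableSet_le measurable_const
      ((Continuous.measurable (continuous_id.dist continuous_const)).comp hest)
  have hdisj : ∀ i j, i ≠ j → Disjoint ((E i)ᶜ) ((E j)ᶜ) := by
    intro i j hij
    rw [Set.disjoint_left]
    intro x hxi hxj
    simp only [hE, Set.mem_compl_iff, Set.mem_setOf_eq, not_le] at hxi hxj
    have h1 := hsep i j hij
    have h2 := dist_triangle (θ i) (est x) (θ j)
    rw [dist_comm (θ i) (est x)] at h2
    linarith
  have hPE : ∀ i, (P (θ i) (E i)).toReal < δ := by
    intro i
    exact (ENNReal.lt_ofReal_iff_toReal_lt (measure_ne_top _ _)).mp (hcon i)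
  have hPA : ∀ i, α < (P (θ i) ((E i)ᶜ)).toReal := by
    intro i
    haveI := hP i
    rw [prob_compl_eq_one_sub (hEmeas i),
      ENNReal.toReal_sub_of_le prob_le_one ENNReal.one_ne_top, ENNReal.toReal_one]
    have := hPE i
    linarith
  have hKL' : ∀ i j, P (θ i) ≪ P (θ j) ∧ Integrable (llr (P (θ i)) (P (θ j))) (P (θ i)) ∧
      ∫ x, llr (P (θ i)) (P (θ j)) x ∂(P (θ i)) ≤ D := by
    intro i j
    have h := hKL i j
    rw [klDiv] at h
    split_ifs at h with hcond
    · exact ⟨hcond.1, hcond.2, (ENNReal.ofReal_le_ofReal_iff hD).mp h⟩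
    · exfalso
      rw [top_le_iff] at h
      exact ENNReal.ofReal_ne_top h
  -- key bound
  have hq : ∀ j i, i ≠ j → 1 / (N:ℝ) < (P (θ j) ((E i)ᶜ)).toReal := by
    intro j i hij
    haveI := hP i; haveI := hP j
    obtain ⟨hac, hint, hKLij⟩ := hKL' i j
    have hAm : MeasurableSet ((E i)ᶜ) := (hEmeas i).compl
    set pA := (P (θ i) ((E i)ᶜ)).toReal with hpAdef
    set qA := (P (θ j) ((E i)ᶜ)).toReal with hqAdef
    have hpA : α < pA := hPA i
    have hpA0 : 0 < pA := hαpos.trans hpA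
    have hpA1 : pA ≤ 1 := by
      rw [hpAdef]
      exact ENNReal.toReal_le_of_le_ofReal zero_le_one (by simpa using prob_le_one)
    have hqA0 : 0 < qA := by
      rcases eq_or_ne (P (θ j) ((E i)ᶜ)) 0 with h0 | h0
      · exfalso
        have : P (θ i) ((E i)ᶜ) = 0 := hac h0
        rw [hpAdef, this] at hpA0
        simp at hpA0
      · exact ENNReal.toReal_pos h0 (measure_ne_top _ _)
    have h1 := setIntegral_llr_ge (P (θ i)) (P (θ j)) hac hint hAm
    have h2 := setIntegral_llr_ge (P (θ i)) (P (θ j)) hac hint hAm.compl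
    have hsum := integral_add_compl hAm hint
    set pA' := (P (θ i) ((E i)ᶜᶜ)).toReal with hpA'def
    set qA' := (P (θ j) ((E i)ᶜᶜ)).toReal with hqA'def
    have hpA'eq : pA' = 1 - pA := by
      rw [hpA'def, prob_compl_eq_one_sub hAm,
        ENNReal.toReal_sub_of_le prob_le_one ENNReal.one_ne_top, ENNReal.toReal_one, hpAdef]
    have hqA'le : qA' ≤ 1 := by
      rw [hqA'def]
      exact ENNReal.toReal_le_of_le_ofReal zero_le_one (by simpa using prob_le_one)
    have hqA'0 : 0 ≤ qA' := ENNReal.toReal_nonneg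
    have hent := binEnt_le pA hpA0.le hpA1
    -- claim : -pA' * log(pA'/qA') ≤ log 2 + pA * log pA
    have hclaim : -(pA' * Real.log (pA' / qA')) ≤ Real.log 2 + pA * Real.log pA := by
      rcases eq_or_lt_of_le (by rw [hpA'def]; exact ENNReal.toReal_nonneg : (0:ℝ) ≤ pA') with h0 | h0
      · rw [← h0]
        have : pA = 1 := by rw [hpA'eq] at h0; linarith
        rw [this]
        simp [hlog2.le]
      · have hqA'pos : 0 < qA' := by
          rcases eq_or_ne (P (θ j) ((E i)ᶜᶜ)) 0 with hz | hz
          · exfalso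
            have : P (θ i) ((E i)ᶜᶜ) = 0 := hac hz
            rw [hpA'def, this] at h0
            simp at h0
          · exact ENNReal.toReal_pos hz (measure_ne_top _ _)
        have hlq : Real.log qA' ≤ 0 := Real.log_nonpos hqA'0 hqA'le
        rw [Real.log_div h0.ne' hqA'pos.ne']
        have := mul_nonneg (le_of_lt h0) (neg_nonneg.mpr hlq)
        rw [hpA'eq] at *
        nlinarith
    have hkey : pA * Real.log (pA / qA) ≤ D + Real.log 2 + pA * Real.log pA := by
      linarith
    have h3 : -(pA * Real.log qA) ≤ D + Real.log 2 := by
      rw [Real.log_div hpA0.ne' hqA0.ne', mul_sub] at hkey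
      linarith
    have h4 : Real.log (1 / (N:ℝ)) < Real.log qA := by
      have h5 : -(D + Real.log 2) / pA ≤ Real.log qA := by
        rw [div_le_iff₀ hpA0]
        nlinarith
      have h6 : (D + Real.log 2) / pA < Real.log N := by
        have : (D + Real.log 2) / pA < (D + Real.log 2) / α :=
          div_lt_div_of_pos_left (by linarith) hαpos hpA
        have hNα : (D + Real.log 2) / α = Real.log N := by
          rw [hα]
          field_simp
        linarith
      rw [Real.log_div one_ne_zero hN0.ne', Real.log_one]
      rw [neg_div] at h5
      linarith
    have := Real.exp_lt_exp.mpr h4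
    rwa [Real.exp_log (by positivity), Real.exp_log hqA0] at this
  -- summation and contradiction
  set j : Fin N := ⟨0, by omega⟩
  haveI := hP j
  have hsubset : ∀ i ∈ Finset.univ.erase j, (E i)ᶜ ⊆ E j := by
    intro i hi
    have h := (hdisj i j (Finset.ne_of_mem_erase hi)).subset_compl_right
    simpa using h
  have hmeassum : P (θ j) (⋃ i ∈ Finset.univ.erase j, (E i)ᶜ)
      = ∑ i ∈ Finset.univ.erase j, P (θ j) ((E i)ᶜ) := by
    refine measure_biUnion_finset ?_ (fun i _ => (hEmeas i).compl)
    intro a _ b _ hab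
    exact hdisj a b hab
  have hub : P (θ j) (⋃ i ∈ Finset.univ.erase j, (E i)ᶜ) ≤ P (θ j) (E j) :=
    measure_mono (Set.iUnion₂_subset hsubset)
  have hsum_lt : ∑ i ∈ Finset.univ.erase j, (P (θ j) ((E i)ᶜ)).toReal < δ := by
    rw [← ENNReal.toReal_sum (fun i _ => measure_ne_top _ _), ← hmeassum]
    calc (P (θ j) (⋃ i ∈ Finset.univ.erase j, (E i)ᶜ)).toReal
        ≤ (P (θ j) (E j)).toReal := ENNReal.toReal_mono (measure_ne_top _ _) hub
      _ < δ := hPE j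
  have hne : (Finset.univ.erase j).Nonempty := by
    rw [← Finset.card_pos, Finset.card_erase_of_mem (Finset.mem_univ j), Finset.card_univ,
      Fintype.card_fin]
    omega
  have hlb : ∑ i ∈ Finset.univ.erase j, (1:ℝ) / N
      < ∑ i ∈ Finset.univ.erase j, (P (θ j) ((E i)ᶜ)).toReal :=
    Finset.sum_lt_sum_of_nonempty hne (fun i hi => hq j i (Finset.ne_of_mem_erase hi))
  have hcard : ∑ i ∈ Finset.univ.erase j, (1:ℝ) / N = ((N:ℝ) - 1) * (1 / N) := by
    rw [Finset.sum_const, Finset.card_erase_of_mem (Finset.mem_univ j), Finset.card_univ,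
      Fintype.card_fin, nsmul_eq_mul]
    have : ((N - 1 : ℕ) : ℝ) = (N:ℝ) - 1 := by
      push_cast [Nat.cast_sub (by omega : 1 ≤ N)]
      ring
    rw [this]
  have hfin : ((N:ℝ) - 1) * (1 / N) = 1 - 1 / N := by field_simp
  -- δ < 1 - 1/N since α > 1/N ; but δ > (N-1)/N = 1 - 1/N, contradiction
  rw [hcard, hfin] at hlb
  have : δ < 1 - 1 / N := by rw [hδdef]; linarith
  linarith
end
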